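/- Let (b_i, c_i)_{i=1}^s be a quadrature rule on [0,1] exact for polynomials of degree ≤ 2s-1, H a finite-dimensional complex inner product space, and u : ℝ → H a polynomial of degree ≤ s. If for each i there exists F_i ∈ H with u'(c_i) = -i F_i and Im⟨F_i, u(c_i)⟩ = 0, then ‖u(1)‖² = ‖u(0)‖². -/

import Mathlib

open scoped InnerProductSpace

theorem stmt_9 {H : Type*} [NormedAddCommGroup H] [InnerProductSpace ℂ H]
    [FiniteDimensional ℂ H]
    (s : ℕ) (hs : 1 ≤ s) (b c : Fin s → ℝ)
    (hquad : ∀ p : Polynomial ℝ, p.natDegree ≤ 2 * s - 1 →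
      ∑ i, b i * p.eval (c i) = ∫ x in (0:ℝ)..1, p.eval x)
    (a : Fin (s + 1) → H) (u : ℝ → H)
    (hu : ∀ t : ℝ, u t = ∑ i : Fin (s + 1), (t ^ (i : ℕ)) • a i)
    (F : Fin s → H)
    (hnode : ∀ i, deriv u (c i) = (-Complex.I) • F i)
    (him : ∀ i, (⟪F i, u (c i)⟫_ℂ).im = 0) :
    ‖u 1‖ ^ 2 = ‖u 0‖ ^ 2 := by
  classical
  -- u is differentiable
  have huf : u = fun t => ∑ i : Fin (s + 1), (t ^ (i : ℕ)) • a i := funext hu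
  have hudiff : Differentiable ℝ u := by
    rw [huf]
    exact Differentiable.fun_sum fun i _ => (differentiable_pow _).smul_const (a i)
  -- the polynomial P with P.eval t = re ⟪u t, u t⟫
  set P : Polynomial ℝ :=
    ∑ i : Fin (s + 1), ∑ j : Fin (s + 1),
      Polynomial.C ((⟪a i, a j⟫_ℂ).re) * Polynomial.X ^ ((i : ℕ) + (j : ℕ)) with hP
  have hPeval : ∀ t : ℝ, P.eval t = (⟪u t, u t⟫_ℂ).re := by
    intro t
    rw [hu t, sum_inner]
    rw [hP]
    simp only [Polynomial.eval_finset_sum, Polynomial.eval_mul, Polynomial.eval_C,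
      Polynomial.eval_pow, Polynomial.eval_X, inner_sum, Complex.re_sum]
    refine Finset.sum_congr rfl fun i _ => ?_
    refine Finset.sum_congr rfl fun j _ => ?_
    rw [← algebraMap_smul ℂ (t ^ (i : ℕ)) (a i), ← algebraMap_smul ℂ (t ^ (j : ℕ)) (a j),
      Complex.coe_algebraMap, inner_smul_left, inner_smul_right, Complex.conj_ofReal]
    simp [← Complex.ofReal_pow, pow_add]
    ring
  -- derivative of the function t ↦ re ⟪u t, u t⟫
  have hderivP : ∀ t : ℝ, deriv (fun t => P.eval t) t
      = (⟪u t, deriv u t⟫_ℂ + ⟪deriv u t, u t⟫_ℂ).re := by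
    intro t
    have h1 : HasDerivAt (fun t => (⟪u t, u t⟫_ℂ))
        (⟪u t, deriv u t⟫_ℂ + ⟪deriv u t, u t⟫_ℂ) t :=
      HasDerivAt.inner ℂ (hudiff t).hasDerivAt (hudiff t).hasDerivAt
    have h2 : HasDerivAt (fun t => (⟪u t, u t⟫_ℂ).re)
        ((⟪u t, deriv u t⟫_ℂ + ⟪deriv u t, u t⟫_ℂ).re) t := by
      have := (Complex.reCLM.hasFDerivAt).comp_hasDerivAt t h1
      simpa [Function.comp_def] using this
    have h3 : (fun t => P.eval t) = fun t => (⟪u t, u t⟫_ℂ).re := funext hPeval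
    rw [h3]
    exact h2.deriv
  -- the derivative of P vanishes at the nodes
  have hnodezero : ∀ i, P.derivative.eval (c i) = 0 := by
    intro i
    have h4 : P.derivative.eval (c i) = deriv (fun t => P.eval t) (c i) :=
      (Polynomial.deriv P).symm
    have h6 : (⟪u (c i), F i⟫_ℂ).im = 0 := by
      rw [← inner_conj_symm, Complex.conj_im, him i, neg_zero]
    rw [h4, hderivP, hnode i, inner_smul_left, inner_smul_right]
    simp [Complex.add_re, Complex.mul_re, Complex.mul_im, him i, h6]
  -- degree bound
  have hdeg : P.derivative.natDegree ≤ 2 * s - 1 := by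
    have hPdeg : P.natDegree ≤ 2 * s := by
      rw [hP]
      refine (Polynomial.natDegree_sum_le _ _).trans ?_
      rw [Finset.fold_max_le]
      refine ⟨Nat.zero_le _, fun i _ => ?_⟩
      refine (Polynomial.natDegree_sum_le _ _).trans ?_
      rw [Finset.fold_max_le]
      refine ⟨Nat.zero_le _, fun j _ => ?_⟩
      refine (Polynomial.natDegree_C_mul_X_pow_le _ _).trans ?_
      have hi : (i : ℕ) ≤ s := Nat.lt_succ_iff.mp i.isLt
      have hj : (j : ℕ) ≤ s := Nat.lt_succ_iff.mp j.isLt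
      omega
    exact (Polynomial.natDegree_derivative_le P).trans (by omega)
  -- fundamental theorem of calculus
  have hftc : ∫ x in (0:ℝ)..1, P.derivative.eval x = P.eval 1 - P.eval 0 := by
    refine intervalIntegral.integral_eq_sub_of_hasDerivAt
      (fun x _ => P.hasDerivAt x) ?_
    exact (Polynomial.continuous _).intervalIntegrable _ _
  have hquadP := hquad P.derivative hdeg
  rw [hftc] at hquadP
  have hsum0 : ∑ i, b i * P.derivative.eval (c i) = 0 := by
    refine Finset.sum_eq_zero fun i _ => ?_
    rw [hnodezero i, mul_zero]
  rw [hsum0] at hquadP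
  have h0 : P.eval 1 = P.eval 0 := by linarith
  have hn : ∀ t : ℝ, P.eval t = ‖u t‖ ^ 2 := fun t => by
    rw [hPeval t, ← RCLike.re_to_complex, inner_self_eq_norm_sq]
  rw [← hn 1, ← hn 0, h0]
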